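/- For all T > 0 and λ > 0, the threshold κ̃(T,λ) = (1 - e^{λT} + λT)/(2 - 2e^{λT} + λT) is strictly less than κ^{FI}(T,λ) = (1 - e^{-λT})/(2 - e^{-λT}). -/
import Mathlib


/-- For all T, λ > 0, κ̃(T,λ) < κ^{FI}(T,λ). -/
theorem stmt_9 (l T : ℝ) (hl : 0 < l) (hT : 0 < T) :
    (1 - Real.exp (l * T) + l * T) / (2 - 2 * Real.exp (l * T) + l * T) <
      (1 - Real.exp (-(l * T))) / (2 - Real.exp (-(l * T))) := by
  set x := l * T with hx
  have hx0 : 0 < x := mul_pos hl hT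
  set E := Real.exp x with hE
  have hExp : E > 1 + x := by
    have := Real.add_one_lt_exp (ne_of_gt hx0)
    linarith
  have hE1 : 1 < E := by linarith
  have hneg : Real.exp (-x) = E⁻¹ := Real.exp_neg x
  have hEpos : (0:ℝ) < E := lt_trans one_pos hE1
  have hkey : E - 1 < x * E := by
    have h := Real.add_one_lt_exp (show -x ≠ 0 by simpa using ne_of_gt hx0)
    rw [hneg] at h
    have h2 : (-x + 1) * E < 1 := by
      have := (mul_lt_mul_of_pos_right h hEpos)
      rwa [inv_mul_cancel₀ (ne_of_gt hEpos)] at this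
    nlinarith
  have hb : 2 - 2 * E + x < 0 := by linarith
  have hd : 0 < 2 - Real.exp (-x) := by
    rw [hneg]
    have : E⁻¹ < 1 := inv_lt_one_of_one_lt₀ hE1
    linarith
  rw [hneg] at *
  have hrw : (1 - E + x) / (2 - 2 * E + x) = (E - 1 - x) / (2 * E - x - 2) := by
    rw [show (E - 1 - x) = -(1 - E + x) by ring, show (2 * E - x - 2) = -(2 - 2*E + x) by ring,
      neg_div_neg_eq]
  rw [hrw, div_lt_div_iff₀ (by linarith) hd]
  have hEinv : E⁻¹ * E = 1 := inv_mul_cancel₀ (ne_of_gt hEpos)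
  nlinarith [mul_pos hx0 hEpos, mul_pos (mul_pos hx0 hx0) hEpos]
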